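/- The noncommutative Motzkin polynomial M_nc(x,y) = x y⁴ x + y x⁴ y − 3 x y² x + 1 is trace positive: for all real symmetric matrices A, B of the same size r, Tr(A B⁴ A + B A⁴ B − 3 A B² A + I_r) ≥ 0. -/

import Mathlib

open scoped Matrix

/-- `ℝ⟨x₁,…,xₙ⟩`: noncommutative polynomials with real coefficients in `n`
noncommuting letters, realized as the monoid algebra of the free monoid on `Fin n`. -/
abbrev NCPoly (n : ℕ) : Type := MonoidAlgebra ℝ (FreeMonoid (Fin n))

/-- The canonical involution `f ↦ f⋆` on `ℝ⟨x⟩`: it fixes `ℝ` and each letter `xᵢ`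
and reverses words. -/
noncomputable def ncStar {n : ℕ} (f : NCPoly n) : NCPoly n :=
  MonoidAlgebra.mapDomain FreeMonoid.reverse f

/-- `degLE f d`: the nc polynomial `f` has degree at most `d`. -/
def degLE {n : ℕ} (f : NCPoly n) (d : ℕ) : Prop :=
  ∀ w ∈ f.coeff.support, FreeMonoid.length w ≤ d

/-- The `i`-th letter `xᵢ` as an nc polynomial. -/
noncomputable def ncX {n : ℕ} (i : Fin n) : NCPoly n :=
  MonoidAlgebra.of ℝ (FreeMonoid (Fin n)) (FreeMonoid.of i)

/-- A word `w` viewed as an nc polynomial (the monomial `w` with coefficient `1`). -/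
noncomputable def ncWord {n : ℕ} (w : FreeMonoid (Fin n)) : NCPoly n :=
  MonoidAlgebra.of ℝ (FreeMonoid (Fin n)) w

/-- Evaluation of an nc polynomial at a tuple `A = (A₁,…,Aₙ)` of square matrices:
the algebra homomorphism `ℝ⟨x⟩ → ℝ^{r×r}` sending `xᵢ` to `Aᵢ`. -/
noncomputable def ncEval {n r : ℕ} (A : Fin n → Matrix (Fin r) (Fin r) ℝ) :
    NCPoly n →ₐ[ℝ] Matrix (Fin r) (Fin r) ℝ :=
  MonoidAlgebra.lift ℝ _ (FreeMonoid (Fin n)) (FreeMonoid.lift A)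

/-- The cone `Σ` of sums of Hermitian squares `Σᵢ gᵢ⋆ gᵢ`. -/
def SOHS (n : ℕ) : Set (NCPoly n) :=
  { f | ∃ (k : ℕ) (g : Fin k → NCPoly n), f = ∑ i, ncStar (g i) * g i }

/-- The truncated cone `Σ_{2d}`: sums of Hermitian squares `Σᵢ gᵢ⋆ gᵢ` with `deg gᵢ ≤ d`. -/
def SOHSdeg (n d : ℕ) : Set (NCPoly n) :=
  { f | ∃ (k : ℕ) (g : Fin k → NCPoly n), (∀ i, degLE (g i) d) ∧ f = ∑ i, ncStar (g i) * g i }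

/-- `f ∼cyc g`: `f - g` is a finite sum of commutators. -/
def cycEq {n : ℕ} (f g : NCPoly n) : Prop :=
  ∃ (k : ℕ) (p q : Fin k → NCPoly n), f - g = ∑ i, (p i * q i - q i * p i)

/-- `Θ`: nc polynomials cyclically equivalent to a sum of Hermitian squares. -/
def Theta (n : ℕ) : Set (NCPoly n) :=
  { f | ∃ σ ∈ SOHS n, cycEq f σ }

/-- The quadratic module `Q(𝔤)` generated by a finite set `G` of nc polynomials:
all finite sums `Σᵢ pᵢ⋆ gᵢ pᵢ` with `gᵢ ∈ G ∪ {1}`. -/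
def QModule {n : ℕ} (G : Finset (NCPoly n)) : Set (NCPoly n) :=
  { f | ∃ (k : ℕ) (g p : Fin k → NCPoly n),
      (∀ i, g i ∈ (G : Set (NCPoly n)) ∪ {1}) ∧ f = ∑ i, ncStar (p i) * g i * p i }

/-- Words of degree (length) at most `d` in `n` letters. -/
def WordLE (n d : ℕ) : Type := { w : FreeMonoid (Fin n) // FreeMonoid.length w ≤ d }

noncomputable instance (n d : ℕ) : Fintype (WordLE n d) := by
  have h : {l : List (Fin n) | l.length ≤ d}.Finite := List.finite_length_le (Fin n) d
  have : Finite (WordLE n d) := h.to_subtype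
  exact Fintype.ofFinite _

instance (n d : ℕ) : DecidableEq (WordLE n d) := by
  unfold WordLE FreeMonoid; exact inferInstance


open Matrix in
private lemma motzkin_scalar_aux (a b : ℝ) : 0 ≤ a^2*b^4 + a^4*b^2 - 3*(a^2*b^2) + 1 := by
  nlinarith [sq_nonneg (a^2*b - b), sq_nonneg (a*b^2 - a), sq_nonneg (a^2*b^2 - 1),
    sq_nonneg (a*b), sq_nonneg (a*b - 1), sq_nonneg (a*b + 1), sq_nonneg a, sq_nonneg b,
    sq_nonneg (a-b), sq_nonneg (a+b)]

open Matrix in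
private lemma trace_DWEWt_aux {r : ℕ} (d e : Fin r → ℝ) (W : Matrix (Fin r) (Fin r) ℝ) :
    (Matrix.diagonal d * W * Matrix.diagonal e * Wᵀ).trace
      = ∑ i, ∑ j, (d i * e j) * W i j ^ 2 := by
  simp [Matrix.trace, Matrix.diag, Matrix.mul_apply, Matrix.transpose_apply,
    Matrix.diagonal_apply, ite_mul, mul_ite, Finset.sum_ite_eq, Finset.sum_ite_eq']
  refine Finset.sum_congr rfl fun i _ => Finset.sum_congr rfl fun j _ => by ring

open Matrix in
private lemma conj_pow_aux {r : ℕ} (U D : Matrix (Fin r) (Fin r) ℝ) (h : star U * U = 1)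
    (h' : U * star U = 1) (m : ℕ) : (U * D * star U) ^ m = U * D ^ m * star U := by
  induction m with
  | zero => simp [pow_zero, h']
  | succ n ih =>
      rw [pow_succ, pow_succ, ih]
      calc U * D ^ n * star U * (U * D * star U)
          = U * D ^ n * (star U * U) * D * star U := by noncomm_ring
        _ = U * (D ^ n * D) * star U := by rw [h]; noncomm_ring

open Matrix in
private lemma trace_eval_aux {r : ℕ} (A B : Matrix (Fin r) (Fin r) ℝ)
    (hA : A.IsHermitian) (hB : B.IsHermitian) (m k : ℕ) :
    (A ^ m * B ^ k).trace = ∑ i, ∑ j,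
      (hA.eigenvalues i ^ m * hB.eigenvalues j ^ k) *
        (((star (hA.eigenvectorUnitary : Matrix (Fin r) (Fin r) ℝ)) *
          (hB.eigenvectorUnitary : Matrix (Fin r) (Fin r) ℝ)) i j) ^ 2 := by
  set U : Matrix (Fin r) (Fin r) ℝ := (hA.eigenvectorUnitary : Matrix (Fin r) (Fin r) ℝ) with hUdef
  set V : Matrix (Fin r) (Fin r) ℝ := (hB.eigenvectorUnitary : Matrix (Fin r) (Fin r) ℝ) with hVdef
  have hU1 : U * star U = 1 := (Matrix.mem_unitaryGroup_iff).mp hA.eigenvectorUnitary.2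
  have hU2 : star U * U = 1 := (Matrix.mem_unitaryGroup_iff').mp hA.eigenvectorUnitary.2
  have hV1 : V * star V = 1 := (Matrix.mem_unitaryGroup_iff).mp hB.eigenvectorUnitary.2
  have hV2 : star V * V = 1 := (Matrix.mem_unitaryGroup_iff').mp hB.eigenvectorUnitary.2
  have hAe : A = U * Matrix.diagonal hA.eigenvalues * star U := by
    have := hA.spectral_theorem
    simpa using this
  have hBe : B = V * Matrix.diagonal hB.eigenvalues * star V := by
    have := hB.spectral_theorem
    simpa using this
  have hWt : star V * U = (star U * V)ᵀ := by
    rw [← Matrix.conjTranspose_eq_transpose_of_trivial, ← Matrix.star_eq_conjTranspose,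
      Matrix.star_mul, star_star]
  conv_lhs => rw [hAe, hBe]
  rw [conj_pow_aux U _ hU2 hU1, conj_pow_aux V _ hV2 hV1,
    Matrix.diagonal_pow, Matrix.diagonal_pow]
  have h1 : U * Matrix.diagonal (hA.eigenvalues ^ m) * star U *
        (V * Matrix.diagonal (hB.eigenvalues ^ k) * star V)
      = U * (Matrix.diagonal (hA.eigenvalues ^ m) * (star U * V) *
          Matrix.diagonal (hB.eigenvalues ^ k) * (star V)) := by
    noncomm_ring
  rw [h1, Matrix.trace_mul_comm]
  have h2 : Matrix.diagonal (hA.eigenvalues ^ m) * (star U * V) *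
        Matrix.diagonal (hB.eigenvalues ^ k) * star V * U
      = Matrix.diagonal (hA.eigenvalues ^ m) * (star U * V) *
        Matrix.diagonal (hB.eigenvalues ^ k) * (star U * V)ᵀ := by
    rw [mul_assoc, hWt]
  rw [h2, trace_DWEWt_aux]
  simp [Pi.pow_apply]

/-- The nc Motzkin polynomial `x y⁴ x + y x⁴ y - 3 x y² x + 1` is trace
positive on all pairs of real symmetric matrices of a common size. -/
theorem motzkin_trace_positive {r : ℕ} (A B : Matrix (Fin r) (Fin r) ℝ)
    (hA : A.IsSymm) (hB : B.IsSymm) :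
    0 ≤ (A * B ^ 4 * A + B * A ^ 4 * B - (3 : ℝ) • (A * B ^ 2 * A) + 1).trace := by
  have hA' : A.IsHermitian := by
    rwa [Matrix.IsHermitian, Matrix.conjTranspose_eq_transpose_of_trivial]
  have hB' : B.IsHermitian := by
    rwa [Matrix.IsHermitian, Matrix.conjTranspose_eq_transpose_of_trivial]
  have t1 : (A*B^4*A).trace = (A^2*B^4).trace := by
    rw [Matrix.trace_mul_comm, ← mul_assoc, ← pow_two]
  have t2 : (B*A^4*B).trace = (A^4*B^2).trace := by
    rw [Matrix.trace_mul_comm, ← mul_assoc, ← pow_two, Matrix.trace_mul_comm]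
  have t3 : (A*B^2*A).trace = (A^2*B^2).trace := by
    rw [Matrix.trace_mul_comm, ← mul_assoc, ← pow_two]
  have t4 : ((1 : Matrix (Fin r) (Fin r) ℝ)).trace = (A^0*B^0).trace := by simp
  have egoal : (A * B ^ 4 * A + B * A ^ 4 * B - (3:ℝ) • (A * B ^ 2 * A) + 1).trace
      = (A^2 * B^4).trace + (A^4 * B^2).trace - 3 * (A^2*B^2).trace + (A^0*B^0).trace := by
    rw [Matrix.trace_add, Matrix.trace_sub, Matrix.trace_add, Matrix.trace_smul,
      t1, t2, t3, ← t4, smul_eq_mul]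
  rw [egoal, trace_eval_aux A B hA' hB' 2 4, trace_eval_aux A B hA' hB' 4 2,
    trace_eval_aux A B hA' hB' 2 2, trace_eval_aux A B hA' hB' 0 0]
  set μ := hA'.eigenvalues
  set ν := hB'.eigenvalues
  set W := (star (hA'.eigenvectorUnitary : Matrix (Fin r) (Fin r) ℝ)) *
    (hB'.eigenvectorUnitary : Matrix (Fin r) (Fin r) ℝ) with hWdef
  have comb : (∑ i, ∑ j, (μ i^2 * ν j^4) * W i j^2) + (∑ i, ∑ j, (μ i^4 * ν j^2) * W i j^2)
      - 3 * (∑ i, ∑ j, (μ i^2 * ν j^2) * W i j^2) + (∑ i, ∑ j, (μ i^0 * ν j^0) * W i j^2)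
      = ∑ i, ∑ j, (μ i^2*ν j^4 + μ i^4*ν j^2 - 3*(μ i^2*ν j^2) + 1) * W i j^2 := by
    simp only [Finset.mul_sum, ← Finset.sum_add_distrib, ← Finset.sum_sub_distrib]
    exact Finset.sum_congr rfl fun i _ => Finset.sum_congr rfl fun j _ => by ring
  rw [comb]
  exact Finset.sum_nonneg fun i _ => Finset.sum_nonneg fun j _ =>
    mul_nonneg (motzkin_scalar_aux _ _) (sq_nonneg _)
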